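/- In the closure argument for the previous lemma: if a Boolean algebra A is generated by a set D containing 1 that is closed under nonzero products and such that every difference a − b of elements of D is a finite disjoint sum of elements of D, then every element of A is a finite disjoint sum of elements of D ∪ {0}. -/
import Mathlib


/-- The Boolean subalgebra generated by a subset `D`: the closure of `D` under
joins, meets and complements. -/
inductive BoolGen {B : Type*} [BooleanAlgebra B] (D : Set B) : B → Prop
  | base {a : B} : a ∈ D → BoolGen D a
  | sup {a b : B} : BoolGen D a → BoolGen D b → BoolGen D (a ⊔ b)
  | inf {a b : B} : BoolGen D a → BoolGen D b → BoolGen D (a ⊓ b)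
  | compl {a : B} : BoolGen D a → BoolGen D aᶜ

section Aux
variable {A : Type*} [BooleanAlgebra A] (D : Set A)

/-- `a` is a finite disjoint sum of elements of `D ∪ {⊥}`. -/
def IsDS (a : A) : Prop :=
  ∃ s : Finset A, ↑s ⊆ D ∪ {⊥} ∧
    (↑s : Set A).Pairwise (fun x y => x ⊓ y = ⊥) ∧ a = s.sup id

variable {D}

lemma isDS_base {a : A} (ha : a ∈ D) : IsDS D a := by
  refine ⟨{a}, ?_, ?_, ?_⟩
  · simp [Set.subset_def, ha]
  · simp [Set.Pairwise]
  · simp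

lemma isDS_bot : IsDS D (⊥ : A) := ⟨∅, by simp, by simp, by simp⟩

lemma isDS_inf (hprod : ∀ a ∈ D, ∀ b ∈ D, a ⊓ b ≠ ⊥ → a ⊓ b ∈ D)
    {a b : A} (ha : IsDS D a) (hb : IsDS D b) : IsDS D (a ⊓ b) := by
  classical
  obtain ⟨s, hsD, hsP, rfl⟩ := ha
  obtain ⟨t, htD, htP, rfl⟩ := hb
  refine ⟨(s ×ˢ t).image (fun p => p.1 ⊓ p.2), ?_, ?_, ?_⟩
  · intro z hz
    simp only [Finset.coe_image, Set.mem_image, Finset.mem_coe, Finset.mem_product] at hz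
    obtain ⟨⟨x, y⟩, ⟨hx, hy⟩, rfl⟩ := hz
    rcases hsD hx with hx' | hx'
    · rcases htD hy with hy' | hy'
      · by_cases hz : x ⊓ y = ⊥
        · right; simp [hz]
        · left; exact hprod x hx' y hy' hz
      · right; simp_all
    · right; simp_all
  · intro z hz w hw hzw
    simp only [Finset.coe_image, Set.mem_image, Finset.mem_coe, Finset.mem_product] at hz hw
    obtain ⟨⟨x₁, y₁⟩, ⟨hx₁, hy₁⟩, rfl⟩ := hz
    obtain ⟨⟨x₂, y₂⟩, ⟨hx₂, hy₂⟩, rfl⟩ := hw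
    by_cases hx : x₁ = x₂
    · subst hx
      have hy : y₁ ≠ y₂ := fun h => hzw (by rw [h])
      have : y₁ ⊓ y₂ = ⊥ := htP hy₁ hy₂ hy
      have hle : x₁ ⊓ y₁ ⊓ (x₁ ⊓ y₂) ≤ y₁ ⊓ y₂ :=
        inf_le_inf inf_le_right inf_le_right
      exact le_bot_iff.mp (this ▸ hle)
    · have : x₁ ⊓ x₂ = ⊥ := hsP hx₁ hx₂ hx
      have hle : x₁ ⊓ y₁ ⊓ (x₂ ⊓ y₂) ≤ x₁ ⊓ x₂ :=
        inf_le_inf inf_le_left inf_le_left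
      exact le_bot_iff.mp (this ▸ hle)
  · rw [Finset.sup_image]
    rw [Finset.sup_product_left]
    simp only [Function.comp]
    rw [Finset.sup_inf_distrib_right]
    congr 1
    ext x
    rw [Finset.sup_inf_distrib_left]
    rfl

lemma isDS_compl (htopD : ⊤ ∈ D)
    (hprod : ∀ a ∈ D, ∀ b ∈ D, a ⊓ b ≠ ⊥ → a ⊓ b ∈ D)
    (hdiff : ∀ a ∈ D, ∀ b ∈ D, ∃ s : Finset A, ↑s ⊆ D ∧
      (↑s : Set A).Pairwise (fun x y => x ⊓ y = ⊥) ∧ a \ b = s.sup id)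
    {a : A} (ha : IsDS D a) : IsDS D aᶜ := by
  classical
  obtain ⟨s, hsD, hsP, rfl⟩ := ha
  clear hsP
  induction s using Finset.induction_on with
  | empty =>
    refine ⟨{⊤}, ?_, by simp [Set.Pairwise], by simp⟩
    intro x hx; simp only [Finset.coe_singleton, Set.mem_singleton_iff] at hx
    exact Or.inl (hx ▸ htopD)
  | @insert x t hx ih =>
    have hsub : ↑t ⊆ D ∪ {⊥} := by
      refine subset_trans ?_ hsD
      simp only [Finset.coe_insert]; exact Set.subset_insert _ _
    have hxD : x ∈ D ∪ {⊥} := hsD (by simp)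
    have hxc : IsDS D xᶜ := by
      rcases hxD with hxD | hxD
      · obtain ⟨u, huD, huP, hu⟩ := hdiff ⊤ htopD x hxD
        exact ⟨u, fun z hz => Or.inl (huD hz), huP, by rw [← hu, sdiff_eq, top_inf_eq]⟩
      · simp only [Set.mem_singleton_iff] at hxD
        subst hxD
        refine ⟨{⊤}, ?_, by simp [Set.Pairwise], by simp⟩
        intro z hz; simp only [Finset.coe_singleton, Set.mem_singleton_iff] at hz
        exact Or.inl (hz ▸ htopD)
    have := isDS_inf hprod hxc (ih hsub)
    rwa [Finset.sup_insert, compl_sup]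
    
lemma isDS_disj_sup {a b : A} (hab : a ⊓ b = ⊥)
    (ha : IsDS D a) (hb : IsDS D b) : IsDS D (a ⊔ b) := by
  classical
  obtain ⟨s, hsD, hsP, rfl⟩ := ha
  obtain ⟨t, htD, htP, rfl⟩ := hb
  refine ⟨s ∪ t, ?_, ?_, by rw [Finset.sup_union]⟩
  · intro z hz
    rcases Finset.mem_union.mp hz with h | h
    · exact hsD h
    · exact htD h
  · intro z hz w hw hzw
    simp only [Finset.coe_union, Set.mem_union, Finset.mem_coe] at hz hw
    have key : ∀ u ∈ s, ∀ v ∈ t, u ⊓ v = ⊥ := by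
      intro u hu v hv
      have : u ⊓ v ≤ s.sup id ⊓ t.sup id :=
        inf_le_inf (Finset.le_sup (f := id) hu) (Finset.le_sup (f := id) hv)
      exact le_bot_iff.mp (hab ▸ this)
    rcases hz with hz | hz <;> rcases hw with hw | hw
    · exact hsP hz hw hzw
    · exact key z hz w hw
    · rw [inf_comm]; exact key w hw z hz
    · exact htP hz hw hzw

end Aux

/-- Closure lemma: if the Boolean algebra `A` is generated by `D` with `1 ∈ D`, `D`
closed under nonzero products, and differences of elements of `D` being finite disjoint
sums of elements of `D`, then every element of `A` is a finite disjoint sum of elements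
of `D ∪ {0}`. -/
theorem stmt7 {A : Type*} [BooleanAlgebra A] (D : Set A)
    (hbotD : ⊥ ∉ D) (htopD : ⊤ ∈ D)
    (hprod : ∀ a ∈ D, ∀ b ∈ D, a ⊓ b ≠ ⊥ → a ⊓ b ∈ D)
    (hdiff : ∀ a ∈ D, ∀ b ∈ D, ∃ s : Finset A, ↑s ⊆ D ∧
      (↑s : Set A).Pairwise (fun x y => x ⊓ y = ⊥) ∧ a \ b = s.sup id)
    (a : A) (ha : BoolGen D a) :
    ∃ s : Finset A, ↑s ⊆ D ∪ {⊥} ∧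
      (↑s : Set A).Pairwise (fun x y => x ⊓ y = ⊥) ∧ a = s.sup id := by
  have : IsDS D a := by
    induction ha with
    | base h => exact isDS_base h
    | sup _ _ iha ihb =>
      rename_i x y _ _
      have hyc : IsDS D (y ⊓ xᶜ) :=
        isDS_inf hprod ihb (isDS_compl htopD hprod hdiff iha)
      have : x ⊔ y = x ⊔ y ⊓ xᶜ := by
        rw [sup_inf_left]
        simp
      rw [this]
      exact isDS_disj_sup (by rw [inf_comm, inf_assoc]; simp) iha hyc
    | inf _ _ iha ihb => exact isDS_inf hprod iha ihb
    | compl _ iha => exact isDS_compl htopD hprod hdiff iha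
  exact this
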